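/- (Reachability conservation.) Assume (N₁, m₁) ▷_E (N₂, m₂) and let F₂ be the E-transform of formula F₁ on N₁. Then F₁ is reachable in (N₁, m₁) (i.e., some reachable marking satisfies F₁) if and only if F₂ is reachable in (N₂, m₂). -/

import Mathlib

/-- A labeled Petri net over a global type `V` of variables/places and labels in
`L` (`none` is the silent label `τ`).  The net only uses the places in `places`:
the flow functions vanish outside of it. -/
structure LNet (V L : Type) where
  T : Type
  places : Set V
  Pre : T → V → ℕ
  Post : T → V → ℕ
  pre_supp : ∀ t p, p ∉ places → Pre t p = 0
  post_supp : ∀ t p, p ∉ places → Post t p = 0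
  label : T → Option L

namespace LNet

variable {V L : Type}

/-- Transition `t` is enabled at marking `m`. -/
def Enabled (N : LNet V L) (m : V → ℕ) (t : N.T) : Prop :=
  ∀ p, N.Pre t p ≤ m p

/-- `m →t m'` : `t` is enabled at `m` and `m' = m - Pre(t) + Post(t)` (pointwise). -/
def Fire (N : LNet V L) (m : V → ℕ) (t : N.T) (m' : V → ℕ) : Prop :=
  N.Enabled m t ∧ ∀ p, m' p = m p - N.Pre t p + N.Post t p

/-- `m ⇒ρ m'` : the firing sequence `ρ` fires from `m` to `m'`. -/
def FireSeq (N : LNet V L) : (V → ℕ) → List N.T → (V → ℕ) → Prop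
  | m, [], m' => m' = m
  | m, t :: ρ, m'' => ∃ m', N.Fire m t m' ∧ N.FireSeq m' ρ m''

/-- Reachability from `m₀`. -/
def Reach (N : LNet V L) (m₀ m : V → ℕ) : Prop :=
  ∃ ρ, N.FireSeq m₀ ρ m

/-- The observation sequence of a firing sequence (silent transitions erased). -/
def Obs (N : LNet V L) (ρ : List N.T) : List L :=
  ρ.filterMap N.label

end LNet

/-- `m₁ ⊎ m₂ ⊨ E` : the two markings are compatible and, jointly, satisfy the
constraint system `E` (i.e. `E ∧ m̲₁ ∧ m̲₂` is satisfiable: some valuation of all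
the variables agrees with `m₁` on `P₁`, with `m₂` on `P₂` and satisfies `E`). -/
def JSat {V L : Type} (N₁ N₂ : LNet V L) (E : (V → ℕ) → Prop)
    (m₁ m₂ : V → ℕ) : Prop :=
  ∃ v : V → ℕ, (∀ p ∈ N₁.places, v p = m₁ p) ∧ (∀ p ∈ N₂.places, v p = m₂ p) ∧ E v

/-- `(N₁, m₁) ⊒_E (N₂, m₂)` : `(N₂, m₂)` is an `E`-abstraction of `(N₁, m₁)`,
conditions (A1) and (A2). -/
def EAbs {V L : Type} (N₁ : LNet V L) (m₁ : V → ℕ) (N₂ : LNet V L) (m₂ : V → ℕ)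
    (E : (V → ℕ) → Prop) : Prop :=
  -- (A1) the initial markings jointly satisfy `E`
  JSat N₁ N₂ E m₁ m₂ ∧
  -- (A2)
  ∀ ρ₁ m₁', N₁.FireSeq m₁ ρ₁ m₁' →
    (∃ m₂' : V → ℕ, JSat N₁ N₂ E m₁' m₂') ∧
    ∀ m₂' : V → ℕ, JSat N₁ N₂ E m₁' m₂' →
      ∃ ρ₂ m₂'', N₂.FireSeq m₂ ρ₂ m₂'' ∧ (∀ p ∈ N₂.places, m₂'' p = m₂' p) ∧
        N₁.Obs ρ₁ = N₂.Obs ρ₂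

/-- `(N₁, m₁) ▷_E (N₂, m₂)` : `E`-abstraction equivalence (abstraction in both
directions). -/
def EEquiv {V L : Type} (N₁ : LNet V L) (m₁ : V → ℕ) (N₂ : LNet V L) (m₂ : V → ℕ)
    (E : (V → ℕ) → Prop) : Prop :=
  EAbs N₁ m₁ N₂ m₂ E ∧ EAbs N₂ m₂ N₁ m₁ E

/-- `F` is a formula whose (free) variables all belong to `S`: its truth value
only depends on the values of the variables in `S`. -/
def FormulaDependsOn {V : Type} (F : (V → ℕ) → Prop) (S : Set V) : Prop :=
  ∀ v w : V → ℕ, (∀ x ∈ S, v x = w x) → (F v ↔ F w)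

/-- The `E`-transform `F₂(ȳ) ≜ ∃x̄. Ẽ(x̄, ȳ) ∧ F₁(x̄)` of a formula `F₁` with
variables in `P₁`: semantically, `m₂` satisfies `F₂` when some marking `m₁`
over `P₁` satisfies `F₁` and `m₁ ⊎ m₂ ⊨ E`. -/
def ETransform {V L : Type} (N₁ N₂ : LNet V L) (E : (V → ℕ) → Prop)
    (F₁ : (V → ℕ) → Prop) : (V → ℕ) → Prop :=
  fun m₂ => ∃ m₁ : V → ℕ, JSat N₁ N₂ E m₁ m₂ ∧ F₁ m₁

/-- `φ` is reachable in `(N, m₀)` : some reachable marking satisfies it. -/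
def Reachable {V L : Type} (N : LNet V L) (m₀ : V → ℕ) (φ : (V → ℕ) → Prop) : Prop :=
  ∃ m, N.Reach m₀ m ∧ φ m

/-- (Reachability conservation.)  Assume `(N₁, m₁) ▷_E (N₂, m₂)` and let `F₂` be
the `E`-transform of a formula `F₁` whose variables are in `P₁`.  Then `F₁` is
reachable in `(N₁, m₁)` iff `F₂` is reachable in `(N₂, m₂)`. -/
theorem reachability_conservation {V L : Type} (N₁ N₂ : LNet V L) (m₁ m₂ : V → ℕ)
    (E : (V → ℕ) → Prop) (F₁ : (V → ℕ) → Prop)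
    (hvars : FormulaDependsOn F₁ N₁.places)
    (h : EEquiv N₁ m₁ N₂ m₂ E) :
    Reachable N₁ m₁ F₁ ↔ Reachable N₂ m₂ (ETransform N₁ N₂ E F₁) := by
  obtain ⟨⟨_, hA2⟩, ⟨_, hB2⟩⟩ := h
  constructor
  · rintro ⟨m₁', ⟨ρ₁, hρ₁⟩, hF⟩
    obtain ⟨⟨m₂', hJ⟩, hall⟩ := hA2 ρ₁ m₁' hρ₁
    obtain ⟨ρ₂, m₂'', hseq, hagree, -⟩ := hall m₂' hJ
    refine ⟨m₂'', ⟨ρ₂, hseq⟩, m₁', ?_, hF⟩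
    obtain ⟨v, hv1, hv2, hvE⟩ := hJ
    exact ⟨v, hv1, fun p hp => (hv2 p hp).trans (hagree p hp).symm, hvE⟩
  · rintro ⟨m₂', ⟨ρ₂, hρ₂⟩, m₁', hJ, hF⟩
    obtain ⟨-, hall⟩ := hB2 ρ₂ m₂' hρ₂
    obtain ⟨ρ₁, m₁'', hseq, hagree, -⟩ := hall m₁'
      (by obtain ⟨v, hv1, hv2, hvE⟩ := hJ; exact ⟨v, hv2, hv1, hvE⟩)
    exact ⟨m₁'', ⟨ρ₁, hseq⟩, (hvars m₁'' m₁' fun p hp => hagree p hp).mpr hF⟩
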